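/- arXiv:1501.01135 — 4 statements merged into one kernel-verified Lean document; each statement's English description precedes it below -/
import Mathlib

section
/- Let k and r be positive integers and p = (p_1,…,p_k) a tuple of non-negative integers. Then the cardinality of M_{p,r} equals the coefficient of the monomial x_1^{p_1} x_2^{p_2} ⋯ x_k^{p_k} in the polynomial ( ∏_{i=1}^{k} (x_i + 1) − ∏_{i=1}^{k} x_i )^r, viewed as a polynomial in the k variables x_1,…,x_k with integer coefficients. -/
open Finset

/-- The cyclic interval `]i,j]` of `[k] = {1,…,k}`, realized inside `ZMod k`
(the element `k` of `[k]` is represented by `0 : ZMod k`). -/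
def cyc (k : ℕ) [NeZero k] (i j : ZMod k) : Finset (ZMod k) :=
  Finset.univ.filter fun x => 1 ≤ (x - i).val ∧ (x - i).val ≤ (j - i).val

/-- Membership in `𝒮_{p,r}` : each `j ∈ [k]` belongs to exactly `p j` of the sets `S_1,…,S_r`. -/
def SprMem (k r : ℕ) [NeZero k] (p : ZMod k → ℕ) (S : Fin r → Finset (ZMod k)) : Prop :=
  ∀ j : ZMod k, Nat.card {i : Fin r // j ∈ S i} = p j

/-- Membership in `ℳ_{p,r}` : member of `𝒮_{p,r}` all of whose sets are proper subsets of `[k]`. -/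
def MprMem (k r : ℕ) [NeZero k] (p : ZMod k → ℕ) (S : Fin r → Finset (ZMod k)) : Prop :=
  SprMem k r p S ∧ ∀ i, S i ≠ Finset.univ

/-- `|ℳ_{p,r}|`. -/
noncomputable def Mcard (k r : ℕ) [NeZero k] (p : ZMod k → ℕ) : ℕ :=
  Nat.card {S : Fin r → Finset (ZMod k) // MprMem k r p S}

/-- `|𝒮_{p,r}|`. -/
noncomputable def Scard (k r : ℕ) [NeZero k] (p : ZMod k → ℕ) : ℕ :=
  Nat.card {S : Fin r → Finset (ZMod k) // SprMem k r p S}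

/-- `|ℳ_{q,r}|` for an integer-valued tuple `q` (empty if some entry of `q` is negative). -/
noncomputable def McardZ (k r : ℕ) [NeZero k] (q : ZMod k → ℤ) : ℕ :=
  Nat.card {S : Fin r → Finset (ZMod k) //
    (∀ j : ZMod k, (Nat.card {i : Fin r // j ∈ S i} : ℤ) = q j) ∧ ∀ i, S i ≠ Finset.univ}

/-- `alphaRel k S i j` holds iff `j = α(i,S)`. -/
def alphaRel (k : ℕ) [NeZero k] (S : Finset (ZMod k)) (i j : ZMod k) : Prop :=
  if S = Finset.univ then j = i else j ∉ S ∧ cyc k i (j - 1) ⊆ S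

/-- `betaRel k S i j` holds iff `j = β(i,S)`. -/
def betaRel (k : ℕ) [NeZero k] (S : Finset (ZMod k)) (i j : ZMod k) : Prop :=
  if S = Finset.univ then j = i else j + 1 ∉ S ∧ cyc k i j ⊆ S

/-- `gammaRel k S i j` holds iff `j = γ(i,S)`. -/
def gammaRel (k : ℕ) [NeZero k] (S : Finset (ZMod k)) (i j : ZMod k) : Prop :=
  if S = Finset.univ then j = i
  else if i ∈ S then j = i - 1
  else j + 1 ∉ S ∧ cyc k i j ⊆ S

/-- The digraph on `[k]` with the `k-1` arcs `(i, ζ(i, S_{f i}))` for `i ∈ [k-1]`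
(the nonzero elements of `ZMod k`) is a tree, i.e. a spanning tree oriented toward
the root `k` (represented by `0`): following the arcs from any vertex reaches the root. -/
def GIsTree (k r : ℕ) [NeZero k] (zeta : Finset (ZMod k) → ZMod k → ZMod k → Prop)
    (S : Fin r → Finset (ZMod k)) (f : {i : ZMod k // i ≠ 0} → Fin r) : Prop :=
  ∃ g : ZMod k → ZMod k, g 0 = 0 ∧
    (∀ i : {i : ZMod k // i ≠ 0}, zeta (S (f i)) i.1 (g i.1)) ∧
    ∀ x : ZMod k, ∃ n : ℕ, g^[n] x = 0

/-- Sample space: pairs of a tuple `S ∈ ℳ_{p,r}` and a surjection `f : [k-1] → [r]`,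
with the uniform probability measure. -/
abbrev OmM (k r : ℕ) [NeZero k] (p : ZMod k → ℕ) : Type :=
  {om : (Fin r → Finset (ZMod k)) × ({i : ZMod k // i ≠ 0} → Fin r) //
    MprMem k r p om.1 ∧ Function.Surjective om.2}

/-- Sample space `Ω`: pairs of a tuple `S ∈ 𝒮_{p,r}` and a surjection `f : [k-1] → [r]`,
with the uniform probability measure. -/
abbrev OmS (k r : ℕ) [NeZero k] (p : ZMod k → ℕ) : Type :=
  {om : (Fin r → Finset (ZMod k)) × ({i : ZMod k // i ≠ 0} → Fin r) //
    SprMem k r p om.1 ∧ Function.Surjective om.2}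

/-- Uniform probability of an event `A` in a (finite) sample space `Om`. -/
noncomputable def PrU {Om : Type} (A : Set Om) : ℚ :=
  (Nat.card A : ℚ) / (Nat.card Om : ℚ)

/-- The `Pr`-determinant of a `k × k` matrix of events (rows and columns indexed by
`[k]`, i.e. by `ZMod k`). -/
noncomputable def Pdet {k : ℕ} [NeZero k] {Om : Type} (E : ZMod k → ZMod k → Set Om) : ℚ :=
  ∑ pi : Equiv.Perm (ZMod k), ((Equiv.Perm.sign pi : ℤ) : ℚ) * PrU (⋂ i : ZMod k, E i (pi i))

/-- The matrix of events `M_α`: `M_{α,i,j} = I^{f(i)}_{i,j}` for `i ∈ [k-1]`, and the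
row of `i = k` (i.e. `0`) is constant equal to `Ω`. -/
def Malpha (k r : ℕ) [NeZero k] (p : ZMod k → ℕ) (i j : ZMod k) : Set (OmS k r p) :=
  {om : OmS k r p | ∀ hi : i ≠ 0, cyc k i j ⊆ om.1.1 (om.1.2 ⟨i, hi⟩)}

/-- The matrix of events `M_β`: `M_{β,i,j} = J^{f(i)}_{i,j+1}` for `i ∈ [k-1]`, and the
row of `i = k` (i.e. `0`) is constant equal to `Ω`. -/
def Mbeta (k r : ℕ) [NeZero k] (p : ZMod k → ℕ) (i j : ZMod k) : Set (OmS k r p) :=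
  {om : OmS k r p | ∀ hi : i ≠ 0,
    if i = j + 1 then om.1.1 (om.1.2 ⟨i, hi⟩) = Finset.univ
    else cyc k i (j + 1) ⊆ om.1.1 (om.1.2 ⟨i, hi⟩)}

/-- Membership of `om` in the event `J^{f(i)}_{a,b}`. -/
def Jmem (k r : ℕ) [NeZero k] (p : ZMod k → ℕ) (om : OmS k r p)
    (i : {i : ZMod k // i ≠ 0}) (a b : ZMod k) : Prop :=
  if a = b then om.1.1 (om.1.2 i) = Finset.univ else cyc k a b ⊆ om.1.1 (om.1.2 i)

/-- `|ℳ_{p,r}|` is the coefficient of `x_1^{p_1} ⋯ x_k^{p_k}` in the polynomial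
`(∏_{i=1}^k (x_i + 1) - ∏_{i=1}^k x_i)^r`. -/
theorem Mcard_eq_coeff (k r : ℕ) [NeZero k] (hr : 0 < r) (p : ZMod k → ℕ) :
    (Mcard k r p : ℤ) =
    MvPolynomial.coeff (Finsupp.equivFunOnFinite.symm p)
      ((((∏ i : ZMod k, (MvPolynomial.X i + 1)) - ∏ i : ZMod k, MvPolynomial.X i) ^ r :

        MvPolynomial (ZMod k) ℤ)) := by
  classical
  set P : Finset (Finset (ZMod k)) := (Finset.univ : Finset (ZMod k)).powerset.erase Finset.univ
    with hP
  set D : (Fin r → Finset (ZMod k)) → (ZMod k →₀ ℕ) :=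
    fun S => ∑ j : Fin r, ∑ i ∈ S j, Finsupp.single i 1 with hD
  have hX : ∀ t : Finset (ZMod k),
      (∏ i ∈ t, (MvPolynomial.X i : MvPolynomial (ZMod k) ℤ)) =
        MvPolynomial.monomial (∑ i ∈ t, Finsupp.single i 1) 1 := by
    intro t
    rw [MvPolynomial.monomial_sum_one]
    exact Finset.prod_congr rfl fun i _ => rfl
  have h1 : ((∏ i : ZMod k, (MvPolynomial.X i + 1)) - ∏ i : ZMod k, MvPolynomial.X i :
      MvPolynomial (ZMod k) ℤ)
      = ∑ t ∈ P, MvPolynomial.monomial (∑ i ∈ t, Finsupp.single i 1) 1 := by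
    rw [Finset.prod_add]
    simp only [Finset.prod_const_one, mul_one]
    rw [← Finset.add_sum_erase _ _ (Finset.mem_powerset_self (Finset.univ : Finset (ZMod k)))]
    rw [hX]
    ring_nf
    exact Finset.sum_congr rfl fun t _ => hX t
  have h2 : (((∏ i : ZMod k, (MvPolynomial.X i + 1)) - ∏ i : ZMod k, MvPolynomial.X i :
      MvPolynomial (ZMod k) ℤ)) ^ r
      = ∑ S ∈ Fintype.piFinset (fun _ : Fin r => P),
          MvPolynomial.monomial (D S) (1 : ℤ) := by
    rw [h1, ← Fin.prod_const r, Finset.prod_univ_sum]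
    refine Finset.sum_congr rfl fun S _ => ?_
    rw [hD, MvPolynomial.monomial_sum_one]
  -- value of D S at a point
  have hDval : ∀ (S : Fin r → Finset (ZMod k)) (i0 : ZMod k),
      D S i0 = Nat.card {j : Fin r // i0 ∈ S j} := by
    intro S i0
    rw [hD, Finsupp.finset_sum_apply]
    have : ∀ j : Fin r, (∑ i ∈ S j, Finsupp.single i 1) i0 = if i0 ∈ S j then 1 else 0 := by
      intro j
      rw [Finsupp.finset_sum_apply]
      simp [Finsupp.single_apply, Finset.sum_ite_eq]
    simp only [this]
    rw [Nat.card_eq_fintype_card, Fintype.card_subtype, Finset.card_filter]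
  have hM : Mcard k r p = ((Fintype.piFinset fun _ : Fin r => P).filter
      (fun S => D S = Finsupp.equivFunOnFinite.symm p)).card := by
    rw [Mcard, Nat.card_eq_fintype_card, Fintype.card_subtype]
    congr 1
    ext S
    simp only [Finset.mem_filter, Fintype.mem_piFinset, Finset.mem_univ, true_and, hP,
      Finset.mem_erase, Finset.mem_powerset, Finset.subset_univ, and_true]
    have hcond : D S = Finsupp.equivFunOnFinite.symm p ↔ SprMem k r p S := by
      rw [DFunLike.ext_iff, SprMem]
      refine forall_congr' fun i0 => ?_
      rw [hDval]
      simp [Finsupp.equivFunOnFinite]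
    rw [MprMem, hcond]
    tauto
  rw [h2, MvPolynomial.coeff_sum]
  simp only [MvPolynomial.coeff_monomial]
  rw [Finset.sum_boole, hM]
end

section
/- Let n be a positive integer, let R be a commutative ring, and let w(i,j) ∈ R be given for every i∈[n−1] and j∈[n] with j ≠ i. Let T_n denote the set of spanning trees of the complete digraph on [n] rooted at n, i.e. sets T of arcs (i,j) with i∈[n−1], j∈[n]∖{i}, such that every vertex i∈[n−1] is incident to exactly one outgoing arc of T and T contains no directed cycle. Let L = (L_{i,j})_{i,j∈[n−1]} be the reduced Laplacian matrix defined by L_{i,j} = −w(i,j) for i ≠ j and L_{i,i} = Σ_{j∈[n]∖{i}} w(i,j). Then Σ_{T∈T_n} ∏_{(i,j)∈T} w(i,j) = det(L). -/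
open Finset

section Aux

variable {ι : Type*} [Fintype ι] [DecidableEq ι] {R : Type*} [CommRing R]

/-- A matrix with unit diagonal that is "triangular" with respect to some `ℕ`-valued
key function has determinant 1. -/
lemma MTT.det_eq_one_of_triangular (M : Matrix ι ι R) (key : ι → ℕ)
    (hdiag : ∀ i, M i i = 1)
    (hoff : ∀ i j, i ≠ j → M i j ≠ 0 → key j < key i) :
    M.det = 1 := by
  rw [Matrix.det_apply']
  rw [Finset.sum_eq_single (1 : Equiv.Perm ι)]
  · simp [hdiag]
  · intro σ _ hσ
    have hs : (Finset.univ.filter fun i => σ i ≠ i).Nonempty := by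
      by_contra h
      have : ∀ x, σ x = x := by
        intro x
        by_contra hx
        exact h ⟨x, Finset.mem_filter.mpr ⟨Finset.mem_univ x, hx⟩⟩
      exact hσ (Equiv.ext this)
    obtain ⟨i, hi, hmax⟩ := Finset.exists_max_image _ key hs
    have hine : σ i ≠ i := (Finset.mem_filter.mp hi).2
    have h0 : M (σ i) i = 0 := by
      by_contra h
      have h1 : key i < key (σ i) := hoff _ _ hine h
      have h2 : key (σ i) ≤ key i :=
        hmax (σ i) (Finset.mem_filter.mpr
          ⟨Finset.mem_univ _, fun hh => hine (σ.injective hh)⟩)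
      omega
    have hz : ∏ j : ι, M (σ j) j = 0 := Finset.prod_eq_zero (Finset.mem_univ i) h0
    rw [hz, mul_zero]
  · intro h
    exact absurd (Finset.mem_univ 1) h

/-- If some nonempty collection of rows of a matrix sums to zero, the determinant is zero. -/
lemma MTT.det_eq_zero_of_sum_rows (M : Matrix ι ι R) (C : Finset ι) (hC : C.Nonempty)
    (hsum : ∑ c ∈ C, M c = 0) : M.det = 0 := by
  obtain ⟨c0, hc0⟩ := hC
  have h := Matrix.det_updateRow_sum M c0 (fun k => if k ∈ C then (1 : R) else 0)
  rw [if_pos hc0, one_smul] at h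
  have h2 : (∑ k, (if k ∈ C then (1 : R) else 0) • M k) = 0 := by
    rw [← hsum]
    simp [ite_smul, Finset.sum_ite_mem]
    exact (Finset.sum_ite_mem _ _ _).trans (by rw [Finset.univ_inter])
  rw [h2] at h
  rw [← h]
  exact Matrix.det_eq_zero_of_row_eq_zero c0 (by simp)

end Aux

open scoped Classical in
/-- The (weighted, directed) matrix-tree theorem over a commutative ring `R`: vertices
are `[n]`, with the root `n` represented by `0 : Fin n`, and the non-root vertices
`[n-1]` by the nonzero elements of `Fin n`. A spanning tree rooted at the root is
encoded by the map `t` sending each non-root vertex to the endpoint of its unique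
outgoing arc (with `t i ≠ i`, and no directed cycle, i.e. iterating `t` from any
vertex reaches the root). The sum of the weights of all spanning trees rooted at
the root equals the determinant of the reduced Laplacian matrix. -/
theorem matrix_tree_theorem (n : ℕ) [NeZero n] (R : Type*) [CommRing R]
    (w : {i : Fin n // i ≠ 0} → Fin n → R) :
    ∑ t ∈ Finset.univ.filter (fun t : {i : Fin n // i ≠ 0} → Fin n =>
        (∀ i : {i : Fin n // i ≠ 0}, t i ≠ i.1) ∧
        ∀ x : Fin n, ∃ m : ℕ,
          (fun y : Fin n => if h : y = 0 then 0 else t ⟨y, h⟩)^[m] x = 0),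
      ∏ i : {i : Fin n // i ≠ 0}, w i (t i) =
    Matrix.det (Matrix.of fun i j : {i : Fin n // i ≠ 0} =>
      if i = j then ∑ l ∈ Finset.univ.erase i.1, w i l else - w i j.1) := by
  classical
  -- basic rows
  set u : {i : Fin n // i ≠ 0} → Fin n → {i : Fin n // i ≠ 0} → R :=
    fun i l j => (if i = j then 1 else 0) - (if l = j.1 then 1 else 0) with hu
  set G : {i : Fin n // i ≠ 0} → Fin n → ({i : Fin n // i ≠ 0} → R) :=
    fun i l => if l = i.1 then 0 else w i l • u i l with hG
  set f := (Matrix.detRowAlternating (n := {i : Fin n // i ≠ 0}) (R := R)).toMultilinearMap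
    with hf
  have hrow : (fun i => ∑ l : Fin n, G i l)
      = fun (i j : {i : Fin n // i ≠ 0}) =>
          if i = j then ∑ l ∈ Finset.univ.erase i.1, w i l else - w i j.1 := by
    funext i j
    have hij : (∑ l : Fin n, G i l) j = ∑ l : Fin n, G i l j := by
      simp
    rw [hij]
    rw [← Finset.sum_erase (Finset.univ) (f := fun l => G i l j) (a := i.1)
      (by simp [hG])]
    by_cases h : i = j
    · subst h
      rw [if_pos rfl]
      apply Finset.sum_congr rfl
      intro l hl
      have hl' : l ≠ i.1 := Finset.ne_of_mem_erase hl
      simp [hG, hu, hl']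
    · rw [if_neg h]
      have hj1 : j.1 ≠ i.1 := fun hh => h (Subtype.ext hh).symm
      have hterm : ∀ l ∈ Finset.univ.erase i.1,
          G i l j = if l = j.1 then - w i j.1 else 0 := by
        intro l hl
        have hl' : l ≠ i.1 := Finset.ne_of_mem_erase hl
        by_cases hlj : l = j.1
        · subst hlj
          simp [hG, hu, hl', h]
        · simp [hG, hu, hl', hlj, h]
      rw [Finset.sum_congr rfl hterm, Finset.sum_ite_eq' _ j.1]
      simp [hj1]
  have hdet : Matrix.det (Matrix.of fun i j : {i : Fin n // i ≠ 0} =>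
        if i = j then ∑ l ∈ Finset.univ.erase i.1, w i l else - w i j.1)
      = ∑ t : {i : Fin n // i ≠ 0} → Fin n, f (fun i => G i (t i)) := by
    have h1 : (Matrix.of fun i j : {i : Fin n // i ≠ 0} =>
        if i = j then ∑ l ∈ Finset.univ.erase i.1, w i l else - w i j.1)
        = Matrix.of (fun i => ∑ l : Fin n, G i l) := by
      rw [hrow]
    rw [h1]
    have h2 : Matrix.det (Matrix.of (fun i => ∑ l : Fin n, G i l))
        = f (fun i => ∑ l : Fin n, G i l) := rfl
    rw [h2, f.map_sum]
  rw [hdet, Finset.sum_filter]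
  apply Finset.sum_congr rfl
  intro t _
  set gfun := (fun y : Fin n => if h : y = 0 then 0 else t ⟨y, h⟩) with hgfun
  by_cases hne : ∀ i : {i : Fin n // i ≠ 0}, t i ≠ i.1
  · have hGt : (fun i => G i (t i)) = fun i => w i (t i) • u i (t i) := by
      funext i
      exact if_neg (hne i)
    rw [hGt, f.map_smul_univ]
    have hfu : f (fun i => u i (t i)) = Matrix.det
        (Matrix.of fun i j : {i : Fin n // i ≠ 0} => u i (t i) j) := rfl
    by_cases hreach : ∀ x : Fin n, ∃ m : ℕ, gfun^[m] x = 0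
    · rw [if_pos ⟨hne, hreach⟩]
      have hone : f (fun i => u i (t i)) = 1 := by
        rw [hfu]
        apply MTT.det_eq_one_of_triangular _ (fun i => Nat.find (hreach i.1))
        · intro i
          simp [hu, hne i]
        · intro i j hij hne0
          have htj : t i = j.1 := by
            by_contra hh
            apply hne0
            simp [hu, hij, hh]
          have hm := Nat.find_spec (hreach i.1)
          have hmpos : Nat.find (hreach i.1) ≠ 0 := by
            intro h0
            rw [h0] at hm
            exact i.2 hm
          obtain ⟨m', hm'⟩ := Nat.exists_eq_succ_of_ne_zero hmpos
          have hgi : gfun i.1 = t i := dif_neg i.2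
          have hstep : gfun^[m'] (j.1) = 0 := by
            rw [← htj, ← hgi, ← Function.iterate_succ_apply, ← hm']
            exact hm
          have hle : Nat.find (hreach j.1) ≤ m' := Nat.find_min' _ hstep
          omega
      rw [hone, smul_eq_mul, mul_one]
    · rw [if_neg (fun hc => hreach hc.2)]
      have hzero : f (fun i => u i (t i)) = 0 := by
        rw [hfu]
        push_neg at hreach
        obtain ⟨x, hx⟩ := hreach
        -- find a cycle
        have hpig : ¬ Function.Injective (fun k : Fin (n + 1) => gfun^[k.1] x) := by
          intro hinj
          have := Fintype.card_le_of_injective _ hinj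
          simp at this
        obtain ⟨a, b, hab, hne'⟩ := Function.not_injective_iff.mp hpig
        have key0 : ∃ (a' q : ℕ), 0 < q ∧ gfun^[q] (gfun^[a'] x) = gfun^[a'] x := by
          rcases hne'.lt_or_gt with hlt | hlt
          · refine ⟨a.1, b.1 - a.1, by omega, ?_⟩
            rw [← Function.iterate_add_apply]
            have hba : (b : ℕ) - a + a = b := by omega
            rw [hba]
            exact hab.symm
          · refine ⟨b.1, a.1 - b.1, by omega, ?_⟩
            rw [← Function.iterate_add_apply]
            have hba : (a : ℕ) - b + b = a := by omega
            rw [hba]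
            exact hab
        obtain ⟨a', q, hq0, hq⟩ := key0
        set y := gfun^[a'] x with hy'
        have hy : ∀ m, gfun^[m] y ≠ 0 := by
          intro m h
          apply hx (m + a')
          rwa [Function.iterate_add_apply]
        have hP : ∃ p, 0 < p ∧ gfun^[p] y = y := ⟨q, hq0, hq⟩
        set p := Nat.find hP with hpdef
        have hp := Nat.find_spec hP
        set c : ℕ → {i : Fin n // i ≠ 0} := fun k => ⟨gfun^[k] y, hy k⟩ with hc
        have hcp : c p = c 0 := Subtype.ext (by simpa [hc] using hp.2)
        have ht : ∀ k, t (c k) = (c (k + 1)).1 := by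
          intro k
          have h1 : gfun ((c k).1) = (c (k + 1)).1 := by
            simp [hc, Function.iterate_succ_apply']
          have h2 : gfun ((c k).1) = t (c k) := dif_neg (c k).2
          rw [← h2, h1]
        have hrowc : ∀ k, (Matrix.of fun i j : {i : Fin n // i ≠ 0} => u i (t i) j) (c k)
            = (fun j => if c k = j then (1 : R) else 0)
              - (fun j => if c (k + 1) = j then (1 : R) else 0) := by
          intro k
          funext j
          have : (t (c k) = j.1) ↔ (c (k + 1) = j) := by
            rw [ht k, Subtype.ext_iff]
          simp only [Matrix.of_apply, hu, Pi.sub_apply]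
          rw [if_congr this rfl rfl]
        have hinj2 : ∀ k l, k < l → l < p → c k ≠ c l := by
          intro k l hkl hlp hckl
          have hyk : gfun^[k] y = gfun^[l] y := Subtype.ext_iff.mp hckl
          have hcontra : gfun^[p - l + k] y = y := by
            rw [Function.iterate_add_apply, hyk, ← Function.iterate_add_apply]
            have hpl : p - l + l = p := by omega
            rw [hpl]
            exact hp.2
          exact Nat.find_min hP (by omega) ⟨by omega, hcontra⟩
        have cinj : ∀ k ∈ Finset.range p, ∀ l ∈ Finset.range p, c k = c l → k = l := by
          intro k hk l hl hkl
          rcases lt_trichotomy k l with h | h | h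
          · exact absurd hkl (hinj2 k l h (Finset.mem_range.mp hl))
          · exact h
          · exact absurd hkl.symm (hinj2 l k h (Finset.mem_range.mp hk))
        apply MTT.det_eq_zero_of_sum_rows _ ((Finset.range p).image c)
        · exact ⟨c 0, Finset.mem_image.mpr ⟨0, Finset.mem_range.mpr hp.1, rfl⟩⟩
        · refine (Finset.sum_image cinj).trans ?_
          rw [Finset.sum_congr rfl (fun k _ => hrowc k)]
          rw [Finset.sum_range_sub' (fun k => (fun j => if c k = j then (1 : R) else 0))]
          rw [hcp]
          exact sub_self _
      rw [hzero, smul_zero]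
  · push_neg at hne
    obtain ⟨i, hi⟩ := hne
    have hGz : G i (t i) = 0 := if_pos hi
    rw [if_neg (fun hc => hc.1 i hi)]
    exact (f.map_coord_zero (m := fun i => G i (t i)) i hGz).symm
end

section
/- Let k and r be positive integers with r < k and let p = (p_1,…,p_k) be a tuple of non-negative integers with S_{p,r} non-empty. Let (S,f) be uniformly distributed on Ω. Then the probability that G_α(S,f) is a tree equals Pdet(M_α), where M_α = (M_{α,i,j})_{i,j∈[k]} is the matrix of events with M_{α,i,j} = I^{f(i)}_{i,j} for i∈[k−1], and M_{α,k,j} = Ω for all j∈[k]. -/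
open Finset

open scoped Classical

section Aux
variable {k : ℕ} [NeZero k]

lemma zval_inj {a b : ZMod k} (h : a.val = b.val) : a = b := ZMod.val_injective k h

lemma neg_one_val : (-1 : ZMod k).val = k - 1 := by
  obtain ⟨n, rfl⟩ := Nat.exists_eq_succ_of_ne_zero (NeZero.ne k)
  exact ZMod.val_neg_one n

lemma cast_val (a : ZMod k) : ((a.val : ℕ) : ZMod k) = a := ZMod.natCast_rightInverse a

lemma val_sub_one {a : ZMod k} (ha : a ≠ 0) : (a - 1).val = a.val - 1 := by
  have h1 : 1 ≤ a.val := Nat.one_le_iff_ne_zero.mpr (fun h => ha (zval_inj (by simp [h])))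
  have : a - 1 = ((a.val - 1 : ℕ) : ZMod k) := by
    rw [Nat.cast_sub h1, cast_val, Nat.cast_one]
  rw [this, ZMod.val_cast_of_lt]
  have := a.val_lt
  omega

lemma val_add_one {a : ZMod k} (ha : a ≠ -1) : (a + 1).val = a.val + 1 := by
  have h1 : a.val < k - 1 := by
    have hlt := a.val_lt
    rcases Nat.lt_or_ge a.val (k-1) with h | h
    · exact h
    · exfalso; apply ha; apply zval_inj; rw [neg_one_val]; omega
  have : a + 1 = ((a.val + 1 : ℕ) : ZMod k) := by rw [Nat.cast_add, cast_val, Nat.cast_one]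
  rw [this, ZMod.val_cast_of_lt]; omega

lemma val_eq_neg_one_iff {a : ZMod k} : a.val = k - 1 ↔ a = -1 :=
  ⟨fun h => zval_inj (by rw [neg_one_val, h]), fun h => by rw [h, neg_one_val]⟩

/-- existence of an exit step when `S ≠ univ` -/
lemma exit_exists {S : Finset (ZMod k)} (hS : S ≠ Finset.univ) (i : ZMod k) :
    ∃ n : ℕ, 0 < n ∧ (i + (n : ZMod k)) ∉ S := by
  obtain ⟨z, hz⟩ : ∃ z, z ∉ S := by
    by_contra h; push_neg at h; exact hS (Finset.eq_univ_iff_forall.mpr h)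
  by_cases hzi : z = i
  · exact ⟨k, Nat.pos_of_ne_zero (NeZero.ne k), by
      rw [ZMod.natCast_self, add_zero, ← hzi]; exact hz⟩
  · refine ⟨(z - i).val, ?_, ?_⟩
    · have : z - i ≠ 0 := fun h => hzi (by rwa [sub_eq_zero] at h)
      exact Nat.pos_of_ne_zero (fun h => this (zval_inj (by simp [h])))
    · rw [cast_val, add_sub_cancel]; exact hz

noncomputable def alphaFun (k : ℕ) [NeZero k] (S : Finset (ZMod k)) (i : ZMod k) : ZMod k :=
  if h : S ≠ Finset.univ then i + ((Nat.find (exit_exists h i) : ℕ) : ZMod k) else i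

section
variable {S : Finset (ZMod k)} (hS : S ≠ Finset.univ) (i : ZMod k)

noncomputable def n0 (hS : S ≠ Finset.univ) (i : ZMod k) : ℕ := Nat.find (exit_exists hS i)

lemma n0_pos : 0 < n0 hS i := (Nat.find_spec (exit_exists hS i)).1
lemma n0_notmem : (i + ((n0 hS i : ℕ) : ZMod k)) ∉ S := (Nat.find_spec (exit_exists hS i)).2
lemma n0_min {t : ℕ} (h1 : 0 < t) (h2 : t < n0 hS i) : (i + (t : ZMod k)) ∈ S := by
  have := Nat.find_min (exit_exists hS i) h2
  push_neg at this
  exact this h1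

lemma n0_le : n0 hS i ≤ k := by
  obtain ⟨z, hz⟩ : ∃ z, z ∉ S := by
    by_contra h; push_neg at h; exact hS (Finset.eq_univ_iff_forall.mpr h)
  by_cases hzi : z = i
  · exact Nat.find_le ⟨Nat.pos_of_ne_zero (NeZero.ne k), by
      rw [ZMod.natCast_self, add_zero, ← hzi]; exact hz⟩
  · have hw : 0 < (z - i).val ∧ (i + (((z - i).val : ℕ) : ZMod k)) ∉ S := by
      constructor
      · have hne : z - i ≠ 0 := fun h => hzi (by rwa [sub_eq_zero] at h)
        exact Nat.pos_of_ne_zero (fun h => hne (zval_inj (by simp [h])))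
      · rw [cast_val, add_sub_cancel]; exact hz
    exact le_trans (Nat.find_le hw) (le_of_lt (z - i).val_lt)

lemma alphaFun_eq : alphaFun k S i = i + ((n0 hS i : ℕ) : ZMod k) := by
  rw [alphaFun, dif_pos hS]; rfl

lemma alpha_L : ((alphaFun k S i - 1) - i).val = n0 hS i - 1 := by
  rw [alphaFun_eq hS]
  have h1 : 1 ≤ n0 hS i := n0_pos hS i
  have h2 : n0 hS i ≤ k := n0_le hS i
  have : i + ((n0 hS i : ℕ) : ZMod k) - 1 - i = (((n0 hS i - 1 : ℕ)) : ZMod k) := by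
    rw [Nat.cast_sub h1, Nat.cast_one]; ring
  rw [this, ZMod.val_cast_of_lt]
  have := NeZero.ne k
  omega

end

lemma alpha_L_univ (i : ZMod k) : ((alphaFun k Finset.univ i - 1) - i).val = k - 1 := by
  rw [alphaFun, dif_neg (by simp)]
  have : i - 1 - i = -1 := by ring
  rw [this, neg_one_val]

lemma mem_cyc {i j x : ZMod k} : x ∈ cyc k i j ↔ 1 ≤ (x - i).val ∧ (x - i).val ≤ (j - i).val := by
  simp [cyc]

/-- Key lemma: `]i,j] ⊆ S` iff `(j-i).val ≤ L(i)`. -/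
lemma cyc_subset_iff (S : Finset (ZMod k)) (i j : ZMod k) :
    cyc k i j ⊆ S ↔ (j - i).val ≤ ((alphaFun k S i - 1) - i).val := by
  by_cases hS : S = Finset.univ
  · subst hS
    simp only [Finset.subset_univ, true_iff, alpha_L_univ]
    have := (j - i).val_lt
    omega
  · rw [alpha_L hS]
    constructor
    · intro hsub
      by_contra hlt
      push_neg at hlt
      have h1 := n0_pos hS i
      have hjk := (j - i).val_lt
      have hn0 : n0 hS i ≤ (j - i).val := by omega
      have hx : (i + ((n0 hS i : ℕ) : ZMod k)) ∈ cyc k i j := by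
        rw [mem_cyc]
        have : (i + ((n0 hS i : ℕ) : ZMod k) - i) = ((n0 hS i : ℕ) : ZMod k) := by ring
        rw [this, ZMod.val_cast_of_lt (by omega)]
        omega
      exact n0_notmem hS i (hsub hx)
    · intro hle x hx
      rw [mem_cyc] at hx
      have h1 := n0_pos hS i
      have hx2 : x = i + (((x - i).val : ℕ) : ZMod k) := by rw [cast_val, add_sub_cancel]
      rw [hx2]
      exact n0_min hS i hx.1 (by omega)

/-- `alphaRel` characterizes `alphaFun`. -/
lemma alphaRel_iff (S : Finset (ZMod k)) (i j : ZMod k) :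
    alphaRel k S i j ↔ j = alphaFun k S i := by
  by_cases hS : S = Finset.univ
  · subst hS
    rw [alphaRel, if_pos rfl, alphaFun, dif_neg (by simp)]
  · rw [alphaRel, if_neg hS]
    constructor
    · rintro ⟨hjS, hsub⟩
      rw [cyc_subset_iff S i (j-1), alpha_L hS] at hsub
      have h1 := n0_pos hS i
      have h2 := n0_le hS i
      by_cases hm : j = i
      · subst hm
        have hik : j - 1 - j = -1 := by ring
        rw [hik, neg_one_val] at hsub
        have hk := Nat.pos_of_ne_zero (NeZero.ne k)
        have hn0k : n0 hS j = k := by omega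
        rw [alphaFun_eq hS, hn0k, ZMod.natCast_self, add_zero]
      · have hji : j - i ≠ 0 := fun h => hm (by rwa [sub_eq_zero] at h)
        have hm1 : 1 ≤ (j - i).val := Nat.pos_of_ne_zero (fun h => hji (zval_inj (by simp [h])))
        have hsub2 : (j - i).val - 1 ≤ n0 hS i - 1 := by
          have : j - 1 - i = (j - i) - 1 := by ring
          rw [this, val_sub_one hji] at hsub
          exact hsub
        have hle1 : (j - i).val ≤ n0 hS i := by omega
        have hle2 : n0 hS i ≤ (j - i).val := by
          apply Nat.find_le
          refine ⟨hm1, ?_⟩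
          rw [cast_val, add_sub_cancel]
          exact hjS
        have heq : n0 hS i = (j - i).val := le_antisymm hle2 hle1
        rw [alphaFun_eq hS, heq, cast_val, add_sub_cancel]
    · intro hj
      subst hj
      constructor
      · rw [alphaFun_eq hS]; exact n0_notmem hS i
      · rw [cyc_subset_iff S i _, alpha_L hS]


def Amat (k : ℕ) [NeZero k] (g : ZMod k → ZMod k) : Matrix (ZMod k) (ZMod k) ℚ :=
  Matrix.of fun i j => if (j - i).val ≤ ((g i - 1) - i).val then 1 else 0

lemma Amat_row_zero (g : ZMod k → ZMod k) (hg : g 0 = 0) (j : ZMod k) : Amat k g 0 j = 1 := by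
  simp only [Amat, Matrix.of_apply, hg]
  rw [if_pos]
  have h1 : (0 : ZMod k) - 1 - 0 = -1 := by ring
  rw [h1, neg_one_val]
  have := (j - 0).val_lt
  omega

lemma Amat_delta (g : ZMod k → ZMod k) (i x : ZMod k) :
    Amat k g i (x + 1) - Amat k g i x
      = (if i = x + 1 then (1:ℚ) else 0) - (if g i = x + 1 then 1 else 0) := by
  have hL := ((g i - 1) - i).val_lt
  by_cases hc : x + 1 = i
  · have h0 : x + 1 - i = 0 := by rw [hc]; ring
    have hxi : x - i = -1 := by linear_combination hc
    have hiff : (k - 1 ≤ ((g i - 1) - i).val) ↔ g i = x + 1 := by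
      constructor
      · intro h
        have : ((g i - 1) - i).val = k - 1 := by omega
        have h2 : (g i - 1) - i = -1 := val_eq_neg_one_iff.mp this
        linear_combination h2 - hc
      · intro h
        have : (g i - 1) - i = -1 := by linear_combination h + hc
        rw [this, neg_one_val]
    simp only [Amat, Matrix.of_apply, h0, hxi, ZMod.val_zero, neg_one_val]
    rw [if_pos (Nat.zero_le _), if_pos hc.symm]
    by_cases h2 : k - 1 ≤ ((g i - 1) - i).val
    · rw [if_pos h2, if_pos (hiff.mp h2)]
    · rw [if_neg h2, if_neg (fun h => h2 (hiff.mpr h))]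
  · have hne : x - i ≠ -1 := fun h => hc (by linear_combination h)
    have hvlt : (x - i).val < k - 1 := by
      have h1 := (x - i).val_lt
      have h2 : (x - i).val ≠ k - 1 := fun h => hne (val_eq_neg_one_iff.mp h)
      have hk := Nat.pos_of_ne_zero (NeZero.ne k)
      omega
    have hv1 : (x + 1 - i).val = (x - i).val + 1 := by
      have h3 : x + 1 - i = (x - i) + 1 := by ring
      rw [h3, val_add_one hne]
    have hi : ¬ (i = x + 1) := fun h => hc h.symm
    have hgiff : g i = x + 1 ↔ (x - i).val = ((g i - 1) - i).val := by
      constructor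
      · intro h
        have h4 : (g i - 1) - i = x - i := by linear_combination h
        rw [h4]
      · intro h
        have h4 := zval_inj h
        linear_combination -h4
    simp only [Amat, Matrix.of_apply, hv1, if_neg hi]
    by_cases h2 : (x - i).val = ((g i - 1) - i).val
    · rw [if_neg (by omega), if_pos (le_of_eq h2), if_pos (hgiff.mpr h2)]
    · rw [if_neg (fun h => h2 (hgiff.mp h))]
      by_cases h3 : (x - i).val ≤ ((g i - 1) - i).val
      · rw [if_pos (by omega), if_pos h3]; norm_num
      · rw [if_neg (by omega), if_neg h3]

noncomputable def depth (g : ZMod k → ZMod k) (htree : ∀ x : ZMod k, ∃ n, g^[n] x = 0)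
    (x : ZMod k) : ℕ := Nat.find (htree x)

lemma depth_step (g : ZMod k → ZMod k) (htree : ∀ x : ZMod k, ∃ n, g^[n] x = 0)
    {x : ZMod k} (hx : x ≠ 0) : depth g htree x = depth g htree (g x) + 1 := by
  simp only [depth]
  rw [Nat.find_eq_iff]
  constructor
  · rw [Function.iterate_succ_apply]
    exact Nat.find_spec (htree (g x))
  · intro m hm
    cases m with
    | zero => simpa using hx
    | succ m =>
      rw [Function.iterate_succ_apply]
      exact Nat.find_min (htree (g x)) (by omega)

lemma no_fix (g : ZMod k → ZMod k) (htree : ∀ x : ZMod k, ∃ n, g^[n] x = 0)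
    {y : ZMod k} (hy : y ≠ 0) : g y ≠ y := by
  intro h
  obtain ⟨n, hn⟩ := htree y
  rw [Function.iterate_fixed h] at hn
  exact hy hn

lemma det_Amat_zero (g : ZMod k → ZMod k) (hg : g 0 = 0)
    (htree : ¬ ∀ x : ZMod k, ∃ n, g^[n] x = 0) : (Amat k g).det = 0 := by
  classical
  -- extract a cycle avoiding 0
  obtain ⟨y, m, hm, hy, hy0⟩ :
      ∃ (y : ZMod k) (m : ℕ), 0 < m ∧ g^[m] y = y ∧ ∀ n, g^[n] y ≠ 0 := by
    push_neg at htree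
    obtain ⟨x₀, hx₀⟩ := htree
    obtain ⟨a, b, hab, heq⟩ := Finite.exists_ne_map_eq_of_infinite (fun n : ℕ => g^[n] x₀)
    rcases Nat.lt_or_ge a b with h | h
    · refine ⟨g^[a] x₀, b - a, by omega, ?_, ?_⟩
      · rw [← Function.iterate_add_apply, show b - a + a = b by omega]
        exact heq.symm
      · intro n
        rw [← Function.iterate_add_apply]
        exact hx₀ (n + a)
    · have h' : b < a := by omega
      refine ⟨g^[b] x₀, a - b, by omega, ?_, ?_⟩
      · rw [← Function.iterate_add_apply, show a - b + b = a by omega]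
        exact heq
      · intro n
        rw [← Function.iterate_add_apply]
        exact hx₀ (n + b)
  set C : Finset (ZMod k) := (Finset.range m).image (fun n => g^[n] y) with hC
  have hyC : y ∈ C := Finset.mem_image.mpr ⟨0, Finset.mem_range.mpr hm, rfl⟩
  have himg : C.image g = C := by
    apply Finset.Subset.antisymm
    · intro t ht
      simp only [hC, Finset.mem_image, Finset.mem_range] at ht ⊢
      obtain ⟨s, ⟨n, hn, rfl⟩, rfl⟩ := ht
      rcases Nat.lt_or_ge (n+1) m with h | h
      · exact ⟨n+1, h, Function.iterate_succ_apply' g n y⟩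
      · have hnm : n + 1 = m := by omega
        refine ⟨0, hm, ?_⟩
        simp only [Function.iterate_zero_apply]
        rw [← Function.iterate_succ_apply' g n y, show n.succ = m from hnm, hy]
    · intro t ht
      simp only [hC, Finset.mem_image, Finset.mem_range] at ht ⊢
      obtain ⟨n, hn, rfl⟩ := ht
      cases n with
      | zero =>
        refine ⟨g^[m-1] y, ⟨m-1, by omega, rfl⟩, ?_⟩
        rw [← Function.iterate_succ_apply' g (m-1) y, show (m-1).succ = m by omega, hy]
        simp
      | succ n =>
        exact ⟨g^[n] y, ⟨n, by omega, rfl⟩, (Function.iterate_succ_apply' g n y).symm⟩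
  have hinj : ∀ x ∈ C, ∀ y ∈ C, g x = g y → x = y := by
    have := Finset.card_image_iff.mp (by rw [himg])
    intro a ha b hb hab
    exact this ha hb hab
  -- the coverage function
  set cov : ZMod k → ℚ := fun x => ∑ i ∈ C, Amat k g i x with hcov
  have hstep : ∀ x : ZMod k, cov (x + 1) = cov x := by
    intro x
    have h1 : cov (x + 1) - cov x = ∑ i ∈ C, (Amat k g i (x+1) - Amat k g i x) := by
      rw [Finset.sum_sub_distrib]
    have h2 : ∑ i ∈ C, (Amat k g i (x+1) - Amat k g i x)
        = ∑ i ∈ C, ((if i = x + 1 then (1:ℚ) else 0) - (if g i = x + 1 then 1 else 0)) := by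
      apply Finset.sum_congr rfl
      intro i _
      exact Amat_delta g i x
    have h3 : ∑ i ∈ C, (if g i = x + 1 then (1:ℚ) else 0)
        = ∑ j ∈ C.image g, (if j = x + 1 then (1:ℚ) else 0) := by
      rw [Finset.sum_image hinj]
    have h4 : cov (x+1) - cov x = 0 := by
      rw [h1, h2, Finset.sum_sub_distrib, h3, himg]
      exact sub_self _
    linarith [h4]
  have hconst : ∀ x : ZMod k, cov x = cov 0 := by
    have hnat : ∀ n : ℕ, cov ((n : ℕ) : ZMod k) = cov 0 := by
      intro n
      induction n with
      | zero => norm_num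
      | succ n ih => rw [Nat.cast_succ, hstep, ih]
    intro x
    rw [← cast_val x]
    exact hnat x.val
  set v : ZMod k → ℚ := fun i => (if i ∈ C then (1:ℚ) else 0) - (if i = 0 then cov 0 else 0)
    with hv
  have hvy : v y = 1 := by
    have hy0' : y ≠ 0 := hy0 0
    simp [hv, hyC, hy0']
  have hvne : v ≠ 0 := by
    intro h
    have := congrFun h y
    rw [hvy] at this
    norm_num at this
  have hvmul : Matrix.vecMul v (Amat k g) = 0 := by
    funext j
    have expand : Matrix.vecMul v (Amat k g) j
        = ∑ i : ZMod k, v i * Amat k g i j := by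
      rw [Matrix.vecMul, dotProduct]
    rw [expand]
    have h5 : ∑ i : ZMod k, v i * Amat k g i j
        = (∑ i : ZMod k, (if i ∈ C then (1:ℚ) else 0) * Amat k g i j)
          - (∑ i : ZMod k, (if i = 0 then cov 0 else 0) * Amat k g i j) := by
      rw [← Finset.sum_sub_distrib]
      apply Finset.sum_congr rfl
      intro i _
      rw [hv]
      ring
    have h6 : ∑ i : ZMod k, (if i ∈ C then (1:ℚ) else 0) * Amat k g i j = cov j := by
      rw [hcov]
      simp only [ite_mul, one_mul, zero_mul]
      rw [Finset.sum_ite_mem, Finset.univ_inter]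
    have h7 : ∑ i : ZMod k, (if i = 0 then cov 0 else 0) * Amat k g i j
        = cov 0 * Amat k g 0 j := by
      simp only [ite_mul, zero_mul]
      rw [Finset.sum_ite_eq' Finset.univ (0 : ZMod k) (fun i => cov 0 * Amat k g i j)]
      simp
    rw [h5, h6, h7, Amat_row_zero g hg j, hconst j]
    simp
  exact Matrix.exists_vecMul_eq_zero_iff.mp ⟨v, hvne, hvmul⟩

def zmodEquiv (k : ℕ) [NeZero k] : Fin k ≃ ZMod k where
  toFun a := ((a.val : ℕ) : ZMod k)
  invFun x := ⟨x.val, x.val_lt⟩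
  left_inv a := by
    ext
    exact ZMod.val_cast_of_lt a.isLt
  right_inv x := cast_val x

def Tmat (k : ℕ) [NeZero k] : Matrix (ZMod k) (ZMod k) ℚ :=
  Matrix.of fun m j => if j = -1 then (if m = -1 then 1 else 0)
    else (if m = j + 1 then 1 else 0) - (if m = j then 1 else 0)

lemma zmodEquiv_val (a : Fin k) : (zmodEquiv k a).val = a.val :=
  ZMod.val_cast_of_lt a.isLt

lemma det_Tmat : (Tmat k).det = (-1 : ℚ)^(k-1) := by
  rw [← Matrix.det_submatrix_equiv_self (zmodEquiv k) (Tmat k)]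
  rw [Matrix.det_of_lowerTriangular]
  · have hdiag : ∀ a : Fin k, (Tmat k).submatrix (zmodEquiv k) (zmodEquiv k) a a
        = if (zmodEquiv k a) = -1 then (1:ℚ) else -1 := by
      intro a
      simp only [Matrix.submatrix_apply, Tmat, Matrix.of_apply]
      by_cases h : zmodEquiv k a = -1
      · rw [if_pos h, if_pos h, if_pos h]
      · rw [if_neg h, if_neg h]
        have hne : zmodEquiv k a ≠ zmodEquiv k a + 1 := by
          intro heq
          have h1 := val_add_one h
          rw [← heq] at h1
          omega
        rw [if_neg hne]
        simp
    rw [Finset.prod_congr rfl (fun a _ => hdiag a)]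
    rw [Fintype.prod_equiv (zmodEquiv k) _ (fun x : ZMod k => if x = -1 then (1:ℚ) else -1)
      (fun a => rfl)]
    rw [← Finset.mul_prod_erase Finset.univ _ (Finset.mem_univ (-1 : ZMod k))]
    rw [if_pos rfl, one_mul]
    rw [Finset.prod_congr rfl (fun x hx => if_neg (Finset.ne_of_mem_erase hx))]
    rw [Finset.prod_const]
    congr 1
    rw [Finset.card_erase_of_mem (Finset.mem_univ _), Finset.card_univ, ZMod.card]
  · intro i j hij
    have hij' : (i : Fin k) < j := hij
    simp only [Matrix.submatrix_apply, Tmat, Matrix.of_apply]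
    have hne1 : zmodEquiv k i ≠ zmodEquiv k j := fun h => (ne_of_lt hij') ((zmodEquiv k).injective h)
    by_cases hj : zmodEquiv k j = -1
    · rw [if_pos hj, if_neg (by rw [← hj]; exact hne1)]
    · rw [if_neg hj]
      have hne2 : zmodEquiv k i ≠ zmodEquiv k j + 1 := by
        intro heq
        have h1 := val_add_one hj
        rw [← heq, zmodEquiv_val, zmodEquiv_val] at h1
        have := Fin.lt_iff_val_lt_val.mp hij'
        omega
      rw [if_neg hne2, if_neg hne1]
      norm_num

lemma AT_apply (g : ZMod k → ZMod k) (i j : ZMod k) :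
    (Amat k g * Tmat k) i j = if j = -1 then Amat k g i (-1)
      else (if i = j + 1 then (1:ℚ) else 0) - (if g i = j + 1 then 1 else 0) := by
  rw [Matrix.mul_apply]
  by_cases hj : j = -1
  · subst hj
    rw [if_pos rfl]
    have hterm : ∀ m : ZMod k, Amat k g i m * Tmat k m (-1)
        = if m = -1 then Amat k g i m else 0 := by
      intro m
      show Amat k g i m * (if (-1 : ZMod k) = -1 then (if m = -1 then (1:ℚ) else 0)
        else (if m = -1 + 1 then 1 else 0) - (if m = -1 then 1 else 0)) = _
      rw [if_pos rfl, mul_ite, mul_one, mul_zero]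
    rw [Finset.sum_congr rfl (fun m _ => hterm m)]
    rw [Finset.sum_ite_eq' Finset.univ (-1 : ZMod k) (fun m => Amat k g i m)]
    simp
  · rw [if_neg hj]
    have hterm : ∀ m : ZMod k, Amat k g i m * Tmat k m j
        = (if m = j + 1 then Amat k g i m else 0) - (if m = j then Amat k g i m else 0) := by
      intro m
      show Amat k g i m * (if j = -1 then (if m = -1 then (1:ℚ) else 0)
        else (if m = j + 1 then 1 else 0) - (if m = j then 1 else 0)) = _
      rw [if_neg hj, mul_sub, mul_ite, mul_one, mul_zero, mul_ite, mul_one, mul_zero]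
    rw [Finset.sum_congr rfl (fun m _ => hterm m), Finset.sum_sub_distrib]
    rw [Finset.sum_ite_eq' Finset.univ (j + 1 : ZMod k) (fun m => Amat k g i m)]
    rw [Finset.sum_ite_eq' Finset.univ (j : ZMod k) (fun m => Amat k g i m)]
    simp only [Finset.mem_univ, if_pos]
    have hd := Amat_delta g i j
    linarith [hd]

lemma sign_sigma0 : Equiv.Perm.sign (Equiv.addRight (1 : ZMod k)) = (-1 : ℤˣ)^(k-1) := by
  obtain ⟨n, rfl⟩ := Nat.exists_eq_succ_of_ne_zero (NeZero.ne k)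
  have h : (Equiv.addRight (1 : ZMod (n+1))) = finRotate (n+1) := by
    apply Equiv.ext
    intro x
    exact (finRotate_succ_apply x).symm
  rw [h]
  simp only [Nat.succ_sub_one]
  have hfr := sign_finRotate (n+1)
  simp only [Nat.add_sub_cancel] at hfr
  exact hfr

lemma det_Amat_one (g : ZMod k → ZMod k) (hg : g 0 = 0)
    (htree : ∀ x : ZMod k, ∃ n, g^[n] x = 0) : (Amat k g).det = 1 := by
  classical
  set σ₀ : Equiv.Perm (ZMod k) := Equiv.addRight (1 : ZMod k) with hσ₀
  have hσ₀app : ∀ j : ZMod k, σ₀ j = j + 1 := fun j => rfl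
  have hAT : (Amat k g * Tmat k).det = ((Equiv.Perm.sign σ₀ : ℤ) : ℚ) := by
    rw [Matrix.det_apply']
    rw [Finset.sum_eq_single σ₀]
    · have hprod : ∏ j : ZMod k, (Amat k g * Tmat k) (σ₀ j) j = 1 := by
        apply Finset.prod_eq_one
        intro j _
        rw [AT_apply]
        by_cases hj : j = -1
        · subst hj
          rw [if_pos rfl, hσ₀app]
          rw [show (-1 : ZMod k) + 1 = 0 by ring]
          exact Amat_row_zero g hg (-1)
        · rw [if_neg hj, hσ₀app]
          rw [if_pos rfl]
          have hj1 : j + 1 ≠ 0 := fun h => hj (by linear_combination h)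
          rw [if_neg (no_fix g htree hj1)]
          norm_num
      rw [hprod, mul_one]
    · intro σ _ hσ
      suffices hzero : ∏ j : ZMod k, (Amat k g * Tmat k) (σ j) j = 0 by
        rw [hzero, mul_zero]
      by_contra h0
      have hfac : ∀ j : ZMod k, (Amat k g * Tmat k) (σ j) j ≠ 0 := by
        intro j hj0
        exact h0 (Finset.prod_eq_zero (Finset.mem_univ j) hj0)
      -- step 1 : σ (-1) = 0
      have hs0 : σ (-1) = 0 := by
        have hj' : σ.symm 0 = -1 := by
          by_contra hne
          apply hfac (σ.symm 0)
          rw [AT_apply, if_neg hne, Equiv.apply_symm_apply]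
          simp only [hg]
          exact sub_self _
        rw [← hj', Equiv.apply_symm_apply]
      -- step 2 : structure of other columns
      have hstep : ∀ j : ZMod k, j ≠ -1 → σ j = j + 1 ∨ g (σ j) = j + 1 := by
        intro j hj
        have := hfac j
        rw [AT_apply, if_neg hj] at this
        by_contra hc
        push_neg at hc
        apply this
        rw [if_neg hc.1, if_neg hc.2, sub_zero]
      -- step 3 : τ := fun i => σ (i - 1) equals identity
      have htau : ∀ i : ZMod k, σ (i - 1) = i := by
        set F : Finset (ZMod k) := Finset.univ.filter (fun i : ZMod k => σ (i - 1) ≠ i) with hF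
        rcases F.eq_empty_or_nonempty with hFe | hFne
        · intro i
          by_contra hne
          have hiF : i ∈ F := by simp [hF, hne]
          rw [hFe] at hiF
          simp at hiF
        · exfalso
          obtain ⟨i, hiF, hmax⟩ := F.exists_max_image (fun i => depth g htree (σ (i - 1))) hFne
          have hiF' : σ (i - 1) ≠ i := by
            rw [hF] at hiF
            simpa using hiF
          have hi0 : i ≠ 0 := by
            rintro rfl
            apply hiF'
            rw [show (0 : ZMod k) - 1 = -1 by ring, hs0]
          have hi1 : i - 1 ≠ -1 := fun h => hi0 (by linear_combination h)
          have hgs : g (σ (i - 1)) = i := by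
            rcases hstep (i-1) hi1 with h | h
            · exfalso; apply hiF'; rw [h]; ring
            · rw [h]; ring
          have hsne0 : σ (i - 1) ≠ 0 := by
            intro h
            rw [h, hg] at hgs
            exact hi0 hgs.symm
          set i2 := σ (i - 1) with hi2
          have hi2ne : i2 ≠ i := hiF'
          have hi2F : i2 ∈ F := by
            rw [hF]
            simp only [Finset.mem_filter, Finset.mem_univ, true_and]
            intro h
            have : i2 - 1 = i - 1 := σ.injective (by rw [h, ← hi2])
            apply hi2ne
            linear_combination this
          have hi21 : i2 - 1 ≠ -1 := fun h => hsne0 (by rw [hi2] at h ⊢; linear_combination h)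
          have hgs2 : g (σ (i2 - 1)) = i2 := by
            rcases hstep (i2 - 1) hi21 with h | h
            · exfalso
              have hmem : i2 ∈ F := hi2F
              rw [hF] at hmem
              simp only [Finset.mem_filter, Finset.mem_univ, true_and] at hmem
              apply hmem
              rw [h]; ring
            · rw [h]; ring
          have hs2ne0 : σ (i2 - 1) ≠ 0 := by
            intro h
            rw [h, hg] at hgs2
            exact hsne0 hgs2.symm
          have hd : depth g htree (σ (i2 - 1)) = depth g htree i2 + 1 := by
            rw [depth_step g htree hs2ne0, hgs2]
          have hle : depth g htree (σ (i2 - 1)) ≤ depth g htree i2 := hmax i2 hi2F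
          omega
      have : σ = σ₀ := by
        apply Equiv.ext
        intro j
        have := htau (j + 1)
        rw [show j + 1 - 1 = j by ring] at this
        rw [this, hσ₀app]
      exact absurd this hσ
    · intro h
      exact absurd (Finset.mem_univ σ₀) h
  have hsign : ((Equiv.Perm.sign σ₀ : ℤ) : ℚ) = (-1 : ℚ)^(k-1) := by
    rw [hσ₀, sign_sigma0]
    push_cast
    norm_num
  have hdet := Matrix.det_mul (Amat k g) (Tmat k)
  rw [hAT, hsign, det_Tmat] at hdet
  have hne : (-1 : ℚ)^(k-1) ≠ 0 := pow_ne_zero _ (by norm_num)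
  have h1 : (1:ℚ) * (-1:ℚ)^(k-1) = (Amat k g).det * (-1:ℚ)^(k-1) := by
    rw [one_mul]
    exact hdet
  exact (mul_right_cancel₀ hne h1).symm


end Aux

noncomputable def Gfun (k r : ℕ) [NeZero k] (S : Fin r → Finset (ZMod k))
    (f : {i : ZMod k // i ≠ 0} → Fin r) : ZMod k → ZMod k :=
  fun x => if h : x = 0 then 0 else alphaFun k (S (f ⟨x, h⟩)) x

lemma Gfun_zero (k r : ℕ) [NeZero k] (S : Fin r → Finset (ZMod k))
    (f : {i : ZMod k // i ≠ 0} → Fin r) : Gfun k r S f 0 = 0 := by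
  simp [Gfun]

lemma GIsTree_iff (k r : ℕ) [NeZero k] (S : Fin r → Finset (ZMod k))
    (f : {i : ZMod k // i ≠ 0} → Fin r) :
    GIsTree k r (alphaRel k) S f ↔ ∀ x : ZMod k, ∃ n, (Gfun k r S f)^[n] x = 0 := by
  constructor
  · rintro ⟨g, hg0, hga, hreach⟩
    have hgG : g = Gfun k r S f := by
      funext x
      by_cases hx : x = 0
      · rw [hx, hg0, Gfun_zero]
      · rw [show Gfun k r S f x = alphaFun k (S (f ⟨x, hx⟩)) x from dif_neg hx]
        exact (alphaRel_iff _ _ _).mp (hga ⟨x, hx⟩)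
    rw [← hgG]
    exact hreach
  · intro h
    refine ⟨Gfun k r S f, Gfun_zero k r S f, ?_, h⟩
    intro i
    apply (alphaRel_iff _ _ _).mpr
    show Gfun k r S f i.1 = alphaFun k (S (f i)) i.1
    simp only [Gfun]
    rw [dif_neg i.2]

lemma Malpha_entry (k r : ℕ) [NeZero k] (p : ZMod k → ℕ) (om : OmS k r p) (i j : ZMod k) :
    (if om ∈ Malpha k r p i j then (1:ℚ) else 0)
      = Amat k (Gfun k r om.1.1 om.1.2) i j := by
  classical
  by_cases hi : i = 0
  · subst hi
    have hm : om ∈ Malpha k r p 0 j := fun h => absurd rfl h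
    rw [if_pos hm]
    exact (Amat_row_zero _ (Gfun_zero k r om.1.1 om.1.2) j).symm
  · have hmem : om ∈ Malpha k r p i j ↔ cyc k i j ⊆ om.1.1 (om.1.2 ⟨i, hi⟩) :=
      ⟨fun h => h hi, fun h _ => h⟩
    have hGf : Gfun k r om.1.1 om.1.2 i = alphaFun k (om.1.1 (om.1.2 ⟨i, hi⟩)) i := by
      simp only [Gfun]
      rw [dif_neg hi]
    show _ = if (j - i).val ≤ ((Gfun k r om.1.1 om.1.2 i - 1) - i).val then (1:ℚ) else 0
    rw [hGf]
    apply if_congr _ rfl rfl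
    rw [hmem]
    exact cyc_subset_iff _ i j

lemma card_eq_sum {Om : Type} [Fintype Om] (P : Om → Prop) :
    ((Nat.card {om : Om // P om} : ℚ)) = ∑ om : Om, if P om then (1:ℚ) else 0 := by
  classical
  rw [Nat.card_eq_fintype_card, Fintype.card_subtype, ← Finset.sum_boole]

lemma cardSet_eq_sum {Om : Type} [Fintype Om] (A : Set Om) :
    ((Nat.card A : ℚ)) = ∑ om : Om, if om ∈ A then (1:ℚ) else 0 := card_eq_sum _


/-- For `(S,f)` uniform on `Ω` (pairs of a tuple in `𝒮_{p,r}` and a surjection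
`[k-1] → [r]`), the probability that `G_α(S,f)` is a tree equals `Pdet(M_α)`. -/
theorem prob_tree_alpha_eq_Pdet (k r : ℕ) [NeZero k] (hr : 0 < r) (hrk : r < k)
    (p : ZMod k → ℕ)
    (hS : Nonempty {S : Fin r → Finset (ZMod k) // SprMem k r p S}) :
    (Nat.card {om : OmS k r p // GIsTree k r (alphaRel k) om.1.1 om.1.2} : ℚ) /
      (Nat.card (OmS k r p) : ℚ) = Pdet (Malpha k r p) := by
  classical
  haveI : Fintype (OmS k r p) := Fintype.ofFinite _
  have hPr : ∀ pi : Equiv.Perm (ZMod k),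
      PrU (⋂ i : ZMod k, Malpha k r p i (pi i))
      = (∑ om : OmS k r p, ∏ i : ZMod k,
          if om ∈ Malpha k r p i (pi i) then (1:ℚ) else 0)
        / (Nat.card (OmS k r p) : ℚ) := by
    intro pi
    rw [PrU]
    congr 1
    rw [cardSet_eq_sum]
    apply Finset.sum_congr rfl
    intro om _
    rw [Fintype.prod_boole]
    apply if_congr _ rfl rfl
    simp [Set.mem_iInter]
  have hdet_om : ∀ om : OmS k r p,
      (∑ pi : Equiv.Perm (ZMod k), ((Equiv.Perm.sign pi : ℤ) : ℚ) *
        ∏ i : ZMod k, if om ∈ Malpha k r p i (pi i) then (1:ℚ) else 0)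
      = if GIsTree k r (alphaRel k) om.1.1 om.1.2 then (1:ℚ) else 0 := by
    intro om
    have hBA : (Matrix.of fun i j : ZMod k => if om ∈ Malpha k r p i j then (1:ℚ) else 0)
        = Amat k (Gfun k r om.1.1 om.1.2) := by
      ext i j
      exact Malpha_entry k r p om i j
    have h1 : (∑ pi : Equiv.Perm (ZMod k), ((Equiv.Perm.sign pi : ℤ) : ℚ) *
        ∏ i : ZMod k, if om ∈ Malpha k r p i (pi i) then (1:ℚ) else 0)
        = (Matrix.transpose (Matrix.of fun i j : ZMod k =>
            if om ∈ Malpha k r p i j then (1:ℚ) else 0)).det := by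
      rw [Matrix.det_apply']
      apply Finset.sum_congr rfl
      intro pi _
      congr 1
    rw [h1, Matrix.det_transpose, hBA]
    by_cases htree : ∀ x : ZMod k, ∃ n, (Gfun k r om.1.1 om.1.2)^[n] x = 0
    · rw [det_Amat_one _ (Gfun_zero k r om.1.1 om.1.2) htree,
        if_pos ((GIsTree_iff k r om.1.1 om.1.2).mpr htree)]
    · rw [det_Amat_zero _ (Gfun_zero k r om.1.1 om.1.2) htree,
        if_neg (fun h => htree ((GIsTree_iff k r om.1.1 om.1.2).mp h))]
  rw [Pdet]
  simp_rw [hPr, ← mul_div_assoc]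
  rw [← Finset.sum_div]
  simp_rw [Finset.mul_sum]
  rw [Finset.sum_comm]
  congr 1
  rw [card_eq_sum]
  apply Finset.sum_congr rfl
  intro om _
  exact (hdet_om om).symm
end

section
/- Let k ≥ 3 and r be positive integers with r < k, let p = (p_1,…,p_k) be a tuple of non-negative integers, let a ∈ {2,3,…,k−1} and D ⊆ [a−2]. Define K_{i,j} and 𝔖_{k,a} as follows: K_{i,i} = ∅ if i∈[a−2]∖D, K_{i,i} = [k] if i∈D∪{a−1}, K_{i,j} = ]i,j] for i∈{a−1,…,k−1}, j∈[k], (i,j) ≠ (a−1,a−1); 𝔖_{k,a} is the set of permutations π of [k] with π(i)=i for all i∈[a−2]. Then Σ sgn(π) = 0, where the sum is over all triples (S,f,π) with S∈S_{p,r}, f a surjection from [k−1] onto [r], and π∈𝔖_{k,a}, satisfying K_{i,π(i)} ⊆ S_{f(i)} for every i∈[k−1] and additionally f(a−1) = f(a). -/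
open Finset

/-- The sets `K_{i,j}` of Section 5.1 (for given `a ∈ {2,…,k-1}` and `D ⊆ [a-2]`):
`K_{i,i} = ∅` for `i ∈ [a-2] ∖ D`, `K_{i,i} = [k]` for `i ∈ D ∪ {a-1}`, and
`K_{i,j} = ]i,j]` for `i ∈ {a-1,…,k-1}`, `j ∈ [k]`, `(i,j) ≠ (a-1,a-1)`.
(The element `m ∈ [k]` is represented by `(m : ZMod k)`, so `i = a-1` means
`i.val + 1 = a`.) -/
def Kset (k a : ℕ) [NeZero k] (D : Finset (ZMod k)) (i j : ZMod k) : Finset (ZMod k) :=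
  if i = j then (if i.val + 1 = a ∨ i ∈ D then Finset.univ else ∅) else cyc k i j

/-- `H_{f,π,j} = ∪ { K_{i,π(i)} : i ∈ [k-1] ∖ {j}, f(i) = f(j) }`. -/
def Hset (k a r : ℕ) [NeZero k] (D : Finset (ZMod k))
    (f : {i : ZMod k // i ≠ 0} → Fin r) (pi : Equiv.Perm (ZMod k))
    (j : {i : ZMod k // i ≠ 0}) : Finset (ZMod k) :=
  (Finset.univ.filter fun i : {i : ZMod k // i ≠ 0} => i ≠ j ∧ f i = f j).biUnion
    (fun i => Kset k a D i.1 (pi i.1))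

section AuxW

variable (k a : ℕ) [NeZero k]

lemma negone_val_aux (hk : 3 ≤ k) : (-1 : ZMod k).val = k - 1 := by
  have h1 : (-1 : ZMod k) = ((k - 1 : ℕ) : ZMod k) := by
    have h2 : ((k : ℕ) : ZMod k) = 0 := ZMod.natCast_self k
    rw [Nat.cast_sub (by omega : 1 ≤ k), h2, Nat.cast_one, zero_sub]
  rw [h1, ZMod.val_cast_of_lt (by omega)]

lemma sub_val_pred_iff (hk : 3 ≤ k) (A z : ZMod k) :
    (z - A).val = k - 1 ↔ z = A - 1 := by
  constructor
  · intro h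
    have h2 : z - A = -1 := by
      apply ZMod.val_injective
      rw [h, negone_val_aux k hk]
    linear_combination h2
  · intro h
    have h2 : z - A = -1 := by rw [h]; ring
    rw [h2, negone_val_aux k hk]

lemma val_sub_pred (hk : 3 ≤ k) (A z : ZMod k) (hz : z ≠ A - 1) :
    (z - (A - 1)).val = (z - A).val + 1 := by
  haveI : Fact (1 < k) := ⟨by omega⟩
  have h1 : z - (A - 1) = (z - A) + 1 := by ring
  rw [h1, ZMod.val_add, ZMod.val_one]
  have hlt : (z - A).val < k := ZMod.val_lt _
  have hne : (z - A).val ≠ k - 1 := fun h => hz ((sub_val_pred_iff k hk A z).mp h)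
  rw [Nat.mod_eq_of_lt (by omega)]

lemma KsetA (hk : 3 ≤ k) (ha : 2 ≤ a) (hak : a ≤ k - 1) (D : Finset (ZMod k))
    (x : ZMod k) :
    Kset k a D ((a : ZMod k) - 1) x = insert (a : ZMod k) (cyc k (a : ZMod k) x) := by
  haveI : Fact (1 < k) := ⟨by omega⟩
  set A := (a : ZMod k) with hA
  have hAval : A.val = a := ZMod.val_cast_of_lt (by omega)
  have hAm1 : A - 1 = ((a - 1 : ℕ) : ZMod k) := by
    rw [Nat.cast_sub (by omega : 1 ≤ a), Nat.cast_one]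
  have hAm1val : (A - 1).val = a - 1 := by
    rw [hAm1, ZMod.val_cast_of_lt (by omega)]
  by_cases hx : x = A - 1
  · subst hx
    rw [Kset, if_pos rfl, if_pos (Or.inl (by omega))]
    ext z
    simp only [cyc, Finset.mem_insert, Finset.mem_filter, Finset.mem_univ, true_and,
      true_iff]
    by_cases hz : z = A
    · exact Or.inl hz
    · right
      have h1 := (A - 1) - A
      have h2 : ((A - 1) - A).val = k - 1 := by
        have : (A - 1) - A = -1 := by ring
        rw [this, negone_val_aux k hk]
      have h3 : z - A ≠ 0 := sub_ne_zero.mpr hz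
      have h4 : (z - A).val ≠ 0 := fun h => h3 (ZMod.val_eq_zero _ |>.mp h)
      have h5 : (z - A).val < k := ZMod.val_lt _
      rw [h2]
      omega
  · rw [Kset, if_neg (fun h => hx h.symm)]
    ext z
    simp only [cyc, Finset.mem_insert, Finset.mem_filter, Finset.mem_univ, true_and]
    have hxv : (x - (A - 1)).val = (x - A).val + 1 := val_sub_pred k hk A x hx
    have hxlt : (x - A).val < k := ZMod.val_lt _
    have hxne : (x - A).val ≠ k - 1 := fun h => hx ((sub_val_pred_iff k hk A x).mp h)
    by_cases hz : z = A - 1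
    · have hzv : (z - (A - 1)).val = 0 := by
        rw [hz]; simp
      have hzA : z ≠ A := by
        rw [hz]; intro h
        have h1 : (1 : ZMod k) = 0 := by linear_combination -h
        have h2 : (1 : ZMod k).val = 1 := ZMod.val_one k
        rw [h1] at h2; simp at h2
      have hzAv : (z - A).val = k - 1 := (sub_val_pred_iff k hk A z).mpr hz
      constructor
      · intro h; omega
      · rintro (h | h)
        · exact absurd h hzA
        · omega
    · have hzv : (z - (A - 1)).val = (z - A).val + 1 := val_sub_pred k hk A z hz
      have hzeq : z = A ↔ (z - A).val = 0 := by
        rw [← sub_eq_zero (a := z) (b := A), ← ZMod.val_eq_zero]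
      rw [hzv, hxv, hzeq]
      omega

lemma KsetB (hk : 3 ≤ k) (ha : 2 ≤ a) (hak : a ≤ k - 1) (D : Finset (ZMod k))
    (hD : ∀ i ∈ D, 1 ≤ i.val ∧ i.val ≤ a - 2) (y : ZMod k) :
    Kset k a D (a : ZMod k) y = cyc k (a : ZMod k) y := by
  have hAval : ((a : ZMod k)).val = a := ZMod.val_cast_of_lt (by omega)
  by_cases hy : y = (a : ZMod k)
  · subst hy
    rw [Kset, if_pos rfl, if_neg]
    · ext z
      simp only [cyc, Finset.mem_filter, Finset.mem_univ, true_and, Finset.notMem_empty,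
        false_iff, not_and, not_le]
      intro h
      have : ((a : ZMod k) - (a : ZMod k)).val = 0 := by simp
      omega
    · rintro (h | h)
      · omega
      · have := hD _ h
        omega
  · rw [Kset, if_neg (fun h => hy h.symm)]

lemma Kswap (hk : 3 ≤ k) (ha : 2 ≤ a) (hak : a ≤ k - 1) (D : Finset (ZMod k))
    (hD : ∀ i ∈ D, 1 ≤ i.val ∧ i.val ≤ a - 2) (S : Finset (ZMod k)) (x y : ZMod k)
    (h1 : Kset k a D ((a : ZMod k) - 1) x ⊆ S) (h2 : Kset k a D (a : ZMod k) y ⊆ S) :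
    Kset k a D ((a : ZMod k) - 1) y ⊆ S ∧ Kset k a D (a : ZMod k) x ⊆ S := by
  rw [KsetA k a hk ha hak D, Finset.insert_subset_iff] at h1 ⊢
  rw [KsetB k a hk ha hak D hD] at h2 ⊢
  exact ⟨⟨h1.1, h2⟩, h1.2⟩

end AuxW

open scoped Classical in
/-- Lemma 9 (`W = 0`): the signed count of triples `(S,f,π)` in `Ω(N^{a,D})` with
`f(a-1) = f(a)` is zero. Here `am` and `aa` denote the elements `a-1` and `a`
of `[k-1]`. -/
theorem signed_sum_W (k r : ℕ) [NeZero k] (hk : 3 ≤ k) (hr : 0 < r) (hrk : r < k)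
    (p : ZMod k → ℕ) (a : ℕ) (ha : 2 ≤ a) (hak : a ≤ k - 1)
    (D : Finset (ZMod k)) (hD : ∀ i ∈ D, 1 ≤ i.val ∧ i.val ≤ a - 2)
    (am aa : {i : ZMod k // i ≠ 0}) (ham : am.1 = (a : ZMod k) - 1)
    (haa : aa.1 = (a : ZMod k)) :
    ∑ x ∈ Finset.univ.filter (fun x : (Fin r → Finset (ZMod k)) ×
          ({i : ZMod k // i ≠ 0} → Fin r) × Equiv.Perm (ZMod k) =>
        SprMem k r p x.1 ∧ Function.Surjective x.2.1 ∧
        (∀ i : ZMod k, 1 ≤ i.val → i.val ≤ a - 2 → x.2.2 i = i) ∧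
        (∀ i : {i : ZMod k // i ≠ 0}, Kset k a D i.1 (x.2.2 i.1) ⊆ x.1 (x.2.1 i)) ∧
        x.2.1 am = x.2.1 aa),
      (Equiv.Perm.sign x.2.2 : ℤ) = 0 := by
  haveI : Fact (1 < k) := ⟨by omega⟩
  have hAval : ((a : ZMod k)).val = a := ZMod.val_cast_of_lt (by omega)
  have hAm1 : (a : ZMod k) - 1 = ((a - 1 : ℕ) : ZMod k) := by
    rw [Nat.cast_sub (by omega : 1 ≤ a), Nat.cast_one]
  have hAm1val : ((a : ZMod k) - 1).val = a - 1 := by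
    rw [hAm1, ZMod.val_cast_of_lt (by omega)]
  have hne : am.1 ≠ aa.1 := by
    rw [ham, haa]
    intro h
    have : ((a : ZMod k) - 1).val = ((a : ZMod k)).val := by rw [h]
    omega
  refine Finset.sum_involution
    (fun x _ => (x.1, x.2.1, x.2.2 * Equiv.swap am.1 aa.1)) ?_ ?_ ?_ ?_
  · intro x hx
    have h1 : Equiv.Perm.sign (x.2.2 * Equiv.swap am.1 aa.1) = -Equiv.Perm.sign x.2.2 := by
      rw [Equiv.Perm.sign_mul, Equiv.Perm.sign_swap hne, mul_neg_one]
    simp only [h1]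
    push_cast
    ring
  · intro x hx hf h
    have h2 : x.2.2 * Equiv.swap am.1 aa.1 = x.2.2 := congrArg (fun y => y.2.2) h
    have h3 : Equiv.swap am.1 aa.1 = 1 := by
      have h2' : x.2.2 * Equiv.swap am.1 aa.1 = x.2.2 * 1 := by rw [mul_one]; exact h2
      exact mul_left_cancel h2'
    have h4 : aa.1 = am.1 := by
      have := congrArg (fun e => e am.1) h3
      simpa [Equiv.swap_apply_left] using this
    exact hne h4.symm
  · intro x hx
    simp only [Finset.mem_filter, Finset.mem_univ, true_and] at hx ⊢
    obtain ⟨hS, hsurj, hfix, hK, hf⟩ := hx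
    refine ⟨hS, hsurj, ?_, ?_, hf⟩
    · intro i h1 h2
      have hiam : i ≠ am.1 := by
        rw [ham]; intro h; rw [h] at h2; omega
      have hiaa : i ≠ aa.1 := by
        rw [haa]; intro h; rw [h] at h2; omega
      have : (x.2.2 * Equiv.swap am.1 aa.1) i = x.2.2 i := by
        simp [Equiv.Perm.mul_apply, Equiv.swap_apply_of_ne_of_ne hiam hiaa]
      rw [this]
      exact hfix i h1 h2
    · have key := Kswap k a hk ha hak D hD (x.1 (x.2.1 am)) (x.2.2 am.1) (x.2.2 aa.1)
        (by rw [← ham]; exact hK am)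
        (by have h := hK aa; rw [← hf] at h; rw [← haa]; exact h)
      intro i
      by_cases hiam : i = am
      · have hsw : (x.2.2 * Equiv.swap am.1 aa.1) i.1 = x.2.2 aa.1 := by
          rw [hiam]; simp [Equiv.Perm.mul_apply, Equiv.swap_apply_left]
        rw [hsw, hiam, ham]
        exact key.1
      · by_cases hiaa : i = aa
        · have hsw : (x.2.2 * Equiv.swap am.1 aa.1) i.1 = x.2.2 am.1 := by
            rw [hiaa]; simp [Equiv.Perm.mul_apply, Equiv.swap_apply_right]
          rw [hsw, hiaa, haa, ← hf]
          exact key.2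
        · have h1 : i.1 ≠ am.1 := fun h => hiam (Subtype.ext h)
          have h2 : i.1 ≠ aa.1 := fun h => hiaa (Subtype.ext h)
          have hsw : (x.2.2 * Equiv.swap am.1 aa.1) i.1 = x.2.2 i.1 := by
            simp [Equiv.Perm.mul_apply, Equiv.swap_apply_of_ne_of_ne h1 h2]
          rw [hsw]
          exact hK i
  · intro x hx
    have : (x.2.2 * Equiv.swap am.1 aa.1) * Equiv.swap am.1 aa.1 = x.2.2 := by
      rw [mul_assoc, Equiv.swap_mul_self, mul_one]
    simp [this]
end
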